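/- Under the Ewens–Pitman weight system, the conditional expectation of the number of old blocks re-observed, given only the number of blocks, satisfies E[R | K_n = j] = j − (1/(C(n,j;σ)·(θ+n)_{m↑}))·Σ_{s=1}^{n−(j−1)} binom(n,s)·(θ + n − s + σ)_{m↑}·C(s,1;σ)·C(n−s, j−1; σ). -/

import Mathlib

open Finset

attribute [local instance] Classical.propDecidable

noncomputable section

/-- Rising factorial `x(x+1)⋯(x+N−1)`. -/
def risingFac (x : ℝ) (N : ℕ) : ℝ := ∏ i ∈ Finset.range N, (x + i)

/-- Falling factorial `x(x−1)⋯(x−N+1)`. -/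
def fallingFac (x : ℝ) (N : ℕ) : ℝ := ∏ i ∈ Finset.range N, (x - i)

/-- Noncentral generalized factorial coefficient `C(N,k;σ,γ)`. -/
def gfc (N k : ℕ) (σ γ : ℝ) : ℝ :=
  (1 / (Nat.factorial k : ℝ)) *
    ∑ i ∈ Finset.range (k + 1),
      (-1 : ℝ) ^ i * (Nat.choose k i : ℝ) * risingFac (-(i : ℝ) * σ - γ) N

/-- Central generalized factorial coefficient `C(N,k;σ)`. -/
def cgfc (N k : ℕ) (σ : ℝ) : ℝ := gfc N k σ 0

/-- Binomial coefficient over `ℤ`, zero unless `0 ≤ b ≤ a`. -/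
def ibinom (a b : ℤ) : ℝ :=
  if 0 ≤ b ∧ b ≤ a then (Nat.choose a.toNat b.toNat : ℝ) else 0

/-- Multinomial coefficient `m!/((l!)^r (m−rl)!)`, zero if `rl > m`. -/
def multinom (m l r : ℕ) : ℝ :=
  if r * l ≤ m then
    (Nat.factorial m : ℝ) / ((Nat.factorial l : ℝ) ^ r * (Nat.factorial (m - r * l) : ℝ))
  else 0

/-- `P` is a set partition of the finset `s`. -/
def IsPartOn {α : Type*} (s : Finset α) (P : Finset (Finset α)) : Prop :=
  (∀ B ∈ P, B ⊆ s) ∧ ∅ ∉ P ∧ ∀ a ∈ s, ∃! B, B ∈ P ∧ a ∈ B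

/-- Restriction of a partition to `s`. -/
def restrictPart {α : Type*} [DecidableEq α] (P : Finset (Finset α)) (s : Finset α) :
    Finset (Finset α) := (P.image fun C => C ∩ s).erase ∅

/-- Gibbs probability of a partition with block sizes `|C|` and `VN k` the Gibbs weight. -/
def gibbsW {α : Type*} (σ : ℝ) (VN : ℕ → ℝ) (P : Finset (Finset α)) : ℝ :=
  VN P.card * ∏ C ∈ P, risingFac (1 - σ) (C.card - 1)

/-- Ewens–Pitman weight system. -/
def EPV (σ θ : ℝ) : ℕ → ℕ → ℝ :=
  fun N k => (∏ i ∈ Finset.range k, (θ + (i : ℝ) * σ)) / risingFac θ N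

/-- The "old" elements `{1,…,n}` inside `{1,…,n+m}`. -/
def oldSet (n m : ℕ) : Finset (Fin (n + m)) :=
  Finset.univ.filter fun x => (x : ℕ) < n

/-- Number of new elements in the block of `ρ` containing the old block `Bi`. -/
def Scount (n m : ℕ) (Bi : Finset (Fin (n + m))) (ρ : Finset (Finset (Fin (n + m)))) : ℕ :=
  ∑ C ∈ ρ.filter (fun C => Bi ⊆ C), (C \ oldSet n m).card

/-- Partitions of `{1,…,n+m}` extending the partition `πP` of the old elements. -/
def extensions (n m : ℕ) (πP : Finset (Finset (Fin (n + m)))) :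
    Finset (Finset (Finset (Fin (n + m)))) :=
  Finset.univ.filter fun ρ => IsPartOn Finset.univ ρ ∧ restrictPart ρ (oldSet n m) = πP

/-- Conditional expectation given complete information (the initial partition `πP`). -/
def condExpPi (σ : ℝ) (V : ℕ → ℕ → ℝ) (n m : ℕ) (πP : Finset (Finset (Fin (n + m))))
    (f : Finset (Finset (Fin (n + m))) → ℝ) : ℝ :=
  (∑ ρ ∈ extensions n m πP, f ρ * gibbsW σ (V (n + m)) ρ) /
    (∑ ρ ∈ extensions n m πP, gibbsW σ (V (n + m)) ρ)

/-- Partitions of `{1,…,n+m}` whose restriction to the old elements has exactly `j` blocks. -/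
def withJ (n m j : ℕ) : Finset (Finset (Finset (Fin (n + m)))) :=
  Finset.univ.filter fun ρ =>
    IsPartOn Finset.univ ρ ∧ (restrictPart ρ (oldSet n m)).card = j

/-- Partitions of `s` with exactly `j` blocks. -/
def partsJOf {α : Type*} [Fintype α] (s : Finset α) (j : ℕ) :
    Finset (Finset (Finset α)) :=
  Finset.univ.filter fun π' => IsPartOn s π' ∧ π'.card = j

/-- Conditional expectation given the incomplete information `K_n = j`. -/
def condExpK (σ : ℝ) (V : ℕ → ℕ → ℝ) (n m j : ℕ)
    (f : Finset (Finset (Fin (n + m))) → ℝ) : ℝ :=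
  (∑ ρ ∈ withJ n m j, f ρ * gibbsW σ (V (n + m)) ρ) /
    (∑ π' ∈ partsJOf (oldSet n m) j, gibbsW σ (V n) π')

/-- Number of old blocks (indexed by `B`) re-observed in the additional sample. -/
def RcntB (n m j : ℕ) (B : Fin j → Finset (Fin (n + m)))
    (ρ : Finset (Finset (Fin (n + m)))) : ℕ :=
  (Finset.univ.filter fun i : Fin j => Scount n m (B i) ρ ≠ 0).card

/-- Number of old blocks (indexed by `B`) re-observed with frequency `l`. -/
def RlcntB (n m j l : ℕ) (B : Fin j → Finset (Fin (n + m)))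
    (ρ : Finset (Finset (Fin (n + m)))) : ℕ :=
  (Finset.univ.filter fun i : Fin j => Scount n m (B i) ρ = l).card

/-- Number of blocks of the restriction whose containing block has a new element. -/
def Rcnt (n m : ℕ) (ρ : Finset (Finset (Fin (n + m)))) : ℕ :=
  ((restrictPart ρ (oldSet n m)).filter fun Bi =>
    ∃ C ∈ ρ, Bi ⊆ C ∧ (C \ oldSet n m) ≠ ∅).card

/-- Number of blocks of the restriction whose containing block has exactly `l` new elements. -/
def Rlcnt (n m l : ℕ) (ρ : Finset (Finset (Fin (n + m)))) : ℕ :=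
  ((restrictPart ρ (oldSet n m)).filter fun Bi =>
    ∃ C ∈ ρ, Bi ⊆ C ∧ (C \ oldSet n m).card = l).card

/-- Number of bijections from `Fin j` onto the blocks of `π'` satisfying `Q`. -/
def bijCount {α : Type*} [Fintype α] (j : ℕ) (π' : Finset (Finset α))
    (Q : (Fin j → Finset α) → Prop) : ℕ :=
  ((Finset.univ : Finset (Fin j → Finset α)).filter fun β =>
    Function.Injective β ∧ Finset.image β Finset.univ = π' ∧ Q β).card

/-- Conditional expectation given almost-complete information. -/
def condExpTau (σ : ℝ) (V : ℕ → ℕ → ℝ) (n m j p : ℕ) (τ : Fin p → Fin j) (nτ : Fin p → ℕ)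
    (f : Finset (Finset (Fin (n + m))) → ℝ) : ℝ :=
  (∑ ρ ∈ withJ n m j,
      (bijCount j (restrictPart ρ (oldSet n m)) (fun β => ∀ i, (β (τ i)).card = nτ i) : ℝ) *
        f ρ * gibbsW σ (V (n + m)) ρ) /
    (∑ π' ∈ partsJOf (oldSet n m) j,
      (bijCount j π' (fun β => ∀ i, (β (τ i)).card = nτ i) : ℝ) * gibbsW σ (V n) π')


/-! ### Auxiliary development -/

section AuxRF

lemma risingFac_zero (x : ℝ) : risingFac x 0 = 1 := by simp [risingFac]

lemma risingFac_succ (x : ℝ) (N : ℕ) : risingFac x (N + 1) = risingFac x N * (x + N) := by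
  simp [risingFac, Finset.prod_range_succ]

lemma risingFac_succ' (x : ℝ) (N : ℕ) : risingFac x (N + 1) = x * risingFac (x + 1) N := by
  rw [risingFac, Finset.prod_range_succ', risingFac]
  push_cast
  rw [add_zero, mul_comm]
  congr 1
  exact Finset.prod_congr rfl (fun i _ => by ring)

lemma risingFac_pos {x : ℝ} (hx : 0 < x) (N : ℕ) : 0 < risingFac x N := by
  apply Finset.prod_pos
  intro i _
  positivity

/-- Recursively defined partition-sum polynomial: `gP σ N j = C(N,j;σ)/σ^j`. -/
def gP (σ : ℝ) : ℕ → ℕ → ℝ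
  | 0, 0 => 1
  | 0, _ + 1 => 0
  | _ + 1, 0 => 0
  | N + 1, j + 1 => gP σ N j + ((N : ℝ) - (j + 1) * σ) * gP σ N (j + 1)

@[simp] lemma gP_zero_zero (σ : ℝ) : gP σ 0 0 = 1 := rfl
@[simp] lemma gP_zero_succ (σ : ℝ) (j : ℕ) : gP σ 0 (j + 1) = 0 := rfl
@[simp] lemma gP_succ_zero (σ : ℝ) (N : ℕ) : gP σ (N + 1) 0 = 0 := rfl
lemma gP_succ_succ (σ : ℝ) (N j : ℕ) :
    gP σ (N + 1) (j + 1) = gP σ N j + ((N : ℝ) - (j + 1) * σ) * gP σ N (j + 1) := rfl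

lemma gP_zero_of_lt (σ : ℝ) : ∀ N j : ℕ, N < j → gP σ N j = 0 := by
  intro N
  induction N with
  | zero => intro j hj
            match j, hj with
            | j + 1, _ => rfl
  | succ N ih =>
      intro j hj
      match j, hj with
      | j + 1, hj =>
        rw [gP_succ_succ, ih j (by omega), ih (j + 1) (by omega)]; ring

lemma gP_nonneg_aux {σ : ℝ} (hσ1 : σ < 1) :
    ∀ N j : ℕ, 0 ≤ gP σ N j ∧ (1 ≤ j → j ≤ N → 0 < gP σ N j) := by
  intro N
  induction N with
  | zero =>
      intro j
      refine ⟨?_, by omega⟩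
      match j with
      | 0 => norm_num
      | j + 1 => norm_num
  | succ N ih =>
      intro j
      match j with
      | 0 => exact ⟨by simp, by omega⟩
      | j + 1 =>
        have key : 0 ≤ ((N : ℝ) - (j + 1) * σ) * gP σ N (j + 1) := by
          rcases le_or_gt (j + 1) N with h | h
          · apply mul_nonneg
            · have hjN : ((j : ℝ) + 1) ≤ (N : ℝ) := by exact_mod_cast h
              nlinarith
            · exact (ih (j + 1)).1
          · rw [gP_zero_of_lt σ N (j + 1) h, mul_zero]
        constructor
        · rw [gP_succ_succ]; have := (ih j).1; push_cast; linarith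
        · intro _ hle
          rw [gP_succ_succ]
          rcases Nat.lt_or_ge N j with h | h
          · omega
          · rcases Nat.eq_zero_or_pos j with hj0 | hj0
            · subst hj0
              rcases Nat.eq_zero_or_pos N with hN0 | hN0
              · subst hN0; norm_num
              · obtain ⟨M, rfl⟩ : ∃ M, N = M + 1 := ⟨N - 1, by omega⟩
                have h1 : 0 < ((M + 1 : ℕ) : ℝ) - (0 + 1) * σ := by
                  push_cast; nlinarith [Nat.cast_nonneg (α := ℝ) M]
                have h2 : 0 < gP σ (M + 1) (0 + 1) := (ih 1).2 le_rfl (by omega)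
                have h3 : gP σ (M + 1) 0 = 0 := by simp
                push_cast at h1 ⊢
                rw [h3]
                nlinarith
            · have h1 := (ih j).2 hj0 h
              push_cast
              linarith

lemma gP_pos {σ : ℝ} (hσ1 : σ < 1) {N j : ℕ} (h1 : 1 ≤ j) (h2 : j ≤ N) : 0 < gP σ N j :=
  (gP_nonneg_aux hσ1 N j).2 h1 h2

lemma gP_nonneg {σ : ℝ} (hσ1 : σ < 1) (N j : ℕ) : 0 ≤ gP σ N j :=
  (gP_nonneg_aux hσ1 N j).1

lemma choose_cast_id (k i : ℕ) (hi : i ≤ k + 1) :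
    ((k : ℝ) + 1 - i) * (Nat.choose (k + 1) i : ℝ) = ((k : ℝ) + 1) * (Nat.choose k i : ℝ) := by
  have h1 : Nat.choose (k + 1) (i + 1) * (i + 1) = Nat.choose (k + 1) i * (k + 1 - i) :=
    Nat.choose_succ_right_eq (k + 1) i
  have h2 : (k + 1) * Nat.choose k i = Nat.choose (k + 1) (i + 1) * (i + 1) :=
    Nat.add_one_mul_choose_eq k i
  have h3 : Nat.choose (k + 1) i * (k + 1 - i) = (k + 1) * Nat.choose k i := by omega
  have h4 : ((Nat.choose (k + 1) i * (k + 1 - i) : ℕ) : ℝ) = (((k + 1) * Nat.choose k i : ℕ) : ℝ) := by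
    exact_mod_cast congrArg (fun x : ℕ => (x : ℝ)) h3
  push_cast [Nat.cast_sub hi] at h4
  linarith

lemma cgfc_zero_right (N : ℕ) : cgfc N 0 σ = if N = 0 then 1 else 0 := by
  simp only [cgfc, gfc]
  rw [Finset.sum_range_one]
  match N with
  | 0 => simp [risingFac]
  | N + 1 =>
    simp only [Nat.factorial_zero, Nat.cast_one, pow_zero, Nat.choose_self]
    rw [risingFac_succ']
    norm_num

lemma cgfc_zero_left (j : ℕ) (σ : ℝ) : cgfc 0 j σ = if j = 0 then 1 else 0 := by
  match j with
  | 0 => simp [cgfc, gfc, risingFac]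
  | j + 1 =>
    simp only [cgfc, gfc, risingFac_zero, mul_one, if_neg (Nat.succ_ne_zero j)]
    have h := Int.alternating_sum_range_choose (n := j + 1)
    rw [if_neg (Nat.succ_ne_zero j)] at h
    have h2 : ∑ i ∈ Finset.range (j + 1 + 1), (-1 : ℝ) ^ i * (Nat.choose (j + 1) i : ℝ) = 0 := by
      exact_mod_cast congrArg (Int.cast : ℤ → ℝ) h
    rw [h2, mul_zero]

lemma cgfc_rec (N k : ℕ) (σ : ℝ) :
    cgfc (N + 1) (k + 1) σ =
      σ * cgfc N k σ + ((N : ℝ) - (k + 1) * σ) * cgfc N (k + 1) σ := by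
  simp only [cgfc, gfc, sub_zero]
  have key : ∑ i ∈ Finset.range (k + 2), (-1 : ℝ) ^ i * (Nat.choose (k + 1) i : ℝ) *
        risingFac (-(i : ℝ) * σ) (N + 1)
      = ((k : ℝ) + 1) * σ * ∑ i ∈ Finset.range (k + 1), (-1 : ℝ) ^ i * (Nat.choose k i : ℝ) *
          risingFac (-(i : ℝ) * σ) N
        + ((N : ℝ) - (k + 1) * σ) * ∑ i ∈ Finset.range (k + 2),
            (-1 : ℝ) ^ i * (Nat.choose (k + 1) i : ℝ) * risingFac (-(i : ℝ) * σ) N := by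
    have hext : ∑ i ∈ Finset.range (k + 1), (-1 : ℝ) ^ i * (Nat.choose k i : ℝ) *
          risingFac (-(i : ℝ) * σ) N
        = ∑ i ∈ Finset.range (k + 2), (-1 : ℝ) ^ i * (Nat.choose k i : ℝ) *
          risingFac (-(i : ℝ) * σ) N := by
      rw [Finset.sum_range_succ (n := k + 1)]
      simp [Nat.choose_succ_self]
    rw [hext, Finset.mul_sum, Finset.mul_sum, ← Finset.sum_add_distrib]
    apply Finset.sum_congr rfl
    intro i hi
    have hi' : i ≤ k + 1 := by
      simp only [Finset.mem_range] at hi; omega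
    rw [risingFac_succ]
    have hc := choose_cast_id k i hi'
    linear_combination ((-1 : ℝ) ^ i * risingFac (-(i : ℝ) * σ) N * σ) * hc
  rw [key]
  have hfac : (Nat.factorial (k + 1) : ℝ) = ((k : ℝ) + 1) * (Nat.factorial k : ℝ) := by
    rw [Nat.factorial_succ]; push_cast; ring
  have hk1 : ((k : ℝ) + 1) ≠ 0 := by positivity
  have hfk : (Nat.factorial k : ℝ) ≠ 0 := by
    exact_mod_cast Nat.factorial_ne_zero k
  have hfk1 : (Nat.factorial (k + 1) : ℝ) ≠ 0 := by
    exact_mod_cast Nat.factorial_ne_zero (k + 1)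
  field_simp
  rw [hfac]
  ring

lemma cgfc_eq_gP {σ : ℝ} : ∀ N j : ℕ, cgfc N j σ = σ ^ j * gP σ N j := by
  intro N
  induction N with
  | zero =>
      intro j
      rw [cgfc_zero_left]
      match j with
      | 0 => simp [gP]
      | j + 1 => simp [gP]
  | succ N ih =>
      intro j
      match j with
      | 0 =>
        rw [cgfc_zero_right]
        show (if N + 1 = 0 then (1:ℝ) else 0) = σ ^ 0 * gP σ (N + 1) 0
        simp [gP]
      | j + 1 =>
        rw [cgfc_rec, ih j, ih (j + 1)]
        show _ = σ ^ (j + 1) * (gP σ N j + ((N : ℝ) - (j + 1) * σ) * gP σ N (j + 1))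
        ring

lemma cgfc_one' (s : ℕ) (hs : 1 ≤ s) (σ : ℝ) :
    cgfc s 1 σ = σ * risingFac (1 - σ) (s - 1) := by
  obtain ⟨t, rfl⟩ : ∃ t, s = t + 1 := ⟨s - 1, by omega⟩
  simp only [cgfc, gfc]
  rw [Finset.sum_range_succ, Finset.sum_range_one]
  simp only [Nat.factorial_one, Nat.cast_one, pow_zero, pow_one, Nat.choose_self,
    Nat.choose_zero_right, Nat.cast_zero]
  rw [show (-(0:ℝ) * σ - 0) = 0 by ring, risingFac_succ' 0 t]
  rw [show (-(1:ℝ) * σ - 0) = -σ by ring, risingFac_succ' (-σ) t]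
  rw [show (-σ + 1 : ℝ) = 1 - σ by ring]
  simp

end AuxRF


section AuxPart

variable {α : Type*} [DecidableEq α] [Fintype α]

/-- All partitions of `s`. -/
def partsOn (s : Finset α) : Finset (Finset (Finset α)) :=
  Finset.univ.filter fun P => IsPartOn s P

/-- Product of block weights. -/
def wprod (σ : ℝ) (P : Finset (Finset α)) : ℝ := ∏ C ∈ P, risingFac (1 - σ) (C.card - 1)

lemma mem_partsOn {s : Finset α} {P : Finset (Finset α)} :
    P ∈ partsOn s ↔ IsPartOn s P := by simp [partsOn]

lemma IsPartOn.block_subset {s : Finset α} {P : Finset (Finset α)} (h : IsPartOn s P)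
    {B : Finset α} (hB : B ∈ P) : B ⊆ s := h.1 B hB

lemma IsPartOn.block_ne_empty {s : Finset α} {P : Finset (Finset α)} (h : IsPartOn s P)
    {B : Finset α} (hB : B ∈ P) : B ≠ ∅ := fun he => h.2.1 (he ▸ hB)

lemma IsPartOn.block_nonempty {s : Finset α} {P : Finset (Finset α)} (h : IsPartOn s P)
    {B : Finset α} (hB : B ∈ P) : B.Nonempty :=
  Finset.nonempty_iff_ne_empty.2 (h.block_ne_empty hB)

lemma IsPartOn.not_mem_block {s : Finset α} {P : Finset (Finset α)} (h : IsPartOn s P)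
    {a : α} (ha : a ∉ s) {B : Finset α} (hB : B ∈ P) : a ∉ B :=
  fun hab => ha (h.block_subset hB hab)

lemma IsPartOn.eq_of_mem {s : Finset α} {P : Finset (Finset α)} (h : IsPartOn s P)
    {B₁ B₂ : Finset α} {a : α} (h1 : B₁ ∈ P) (h2 : B₂ ∈ P) (ha1 : a ∈ B₁) (ha2 : a ∈ B₂) :
    B₁ = B₂ := by
  have has : a ∈ s := h.block_subset h1 ha1
  obtain ⟨B, _, hu⟩ := h.2.2 a has
  rw [hu B₁ ⟨h1, ha1⟩, hu B₂ ⟨h2, ha2⟩]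

lemma IsPartOn.sum_card {s : Finset α} {P : Finset (Finset α)} (h : IsPartOn s P) :
    ∑ C ∈ P, C.card = s.card := by
  have hbu : P.biUnion (fun B => B) = s := by
    ext x
    simp only [Finset.mem_biUnion]
    constructor
    · rintro ⟨B, hB, hx⟩; exact h.block_subset hB hx
    · intro hx
      obtain ⟨B, ⟨hB, hxB⟩, _⟩ := h.2.2 x hx
      exact ⟨B, hB, hxB⟩
  have hdisj : ∀ B₁ ∈ P, ∀ B₂ ∈ P, B₁ ≠ B₂ → Disjoint B₁ B₂ := by
    intro B₁ h1 B₂ h2 hne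
    rw [Finset.disjoint_left]
    intro x hx1 hx2
    exact hne (h.eq_of_mem h1 h2 hx1 hx2)
  conv_rhs => rw [← hbu]
  exact (Finset.card_biUnion hdisj).symm

/-- The block of `P` containing `a`. -/
def blockOf (P : Finset (Finset α)) (a : α) : Finset α :=
  (P.filter fun B => a ∈ B).biUnion id

lemma blockOf_eq {s : Finset α} {P : Finset (Finset α)} (h : IsPartOn s P)
    {B : Finset α} {a : α} (hB : B ∈ P) (ha : a ∈ B) : blockOf P a = B := by
  have hf : P.filter (fun C => a ∈ C) = {B} := by
    ext C
    simp only [Finset.mem_filter, Finset.mem_singleton]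
    constructor
    · rintro ⟨hC, haC⟩; exact h.eq_of_mem hC hB haC ha
    · rintro rfl; exact ⟨hB, ha⟩
  rw [blockOf, hf, Finset.singleton_biUnion, id]

lemma blockOf_spec {s : Finset α} {P : Finset (Finset α)} (h : IsPartOn s P)
    {a : α} (ha : a ∈ s) : blockOf P a ∈ P ∧ a ∈ blockOf P a := by
  obtain ⟨B, ⟨hB, haB⟩, _⟩ := h.2.2 a ha
  rw [blockOf_eq h hB haB]
  exact ⟨hB, haB⟩

lemma mem_restrictPart {P : Finset (Finset α)} {t B : Finset α} :
    B ∈ restrictPart P t ↔ B ≠ ∅ ∧ ∃ C ∈ P, C ∩ t = B := by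
  simp [restrictPart, Finset.mem_erase, Finset.mem_image, and_comm]

lemma restrict_isPartOn {s t : Finset α} {P : Finset (Finset α)} (h : IsPartOn s P)
    (hts : t ⊆ s) : IsPartOn t (restrictPart P t) := by
  refine ⟨?_, ?_, ?_⟩
  · intro B hB
    obtain ⟨-, C, -, rfl⟩ := mem_restrictPart.1 hB
    exact Finset.inter_subset_right
  · intro hB
    exact (mem_restrictPart.1 hB).1 rfl
  · intro a hat
    obtain ⟨B, ⟨hB, haB⟩, -⟩ := h.2.2 a (hts hat)
    refine ⟨B ∩ t, ⟨mem_restrictPart.2 ⟨?_, B, hB, rfl⟩, Finset.mem_inter.2 ⟨haB, hat⟩⟩, ?_⟩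
    · intro he
      have : a ∈ B ∩ t := Finset.mem_inter.2 ⟨haB, hat⟩
      rw [he] at this
      exact absurd this (Finset.notMem_empty a)
    · rintro D ⟨hD, haD⟩
      obtain ⟨-, C, hC, rfl⟩ := mem_restrictPart.1 hD
      have : C = B := h.eq_of_mem hC hB (Finset.mem_inter.1 haD).1 haB
      rw [this]

lemma restrict_self {s : Finset α} {P : Finset (Finset α)} (h : IsPartOn s P) :
    restrictPart P s = P := by
  rw [restrictPart]
  have himg : P.image (fun C => C ∩ s) = P := by
    conv_rhs => rw [← Finset.image_id (s := P)]
    apply Finset.image_congr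
    intro C hC
    exact Finset.inter_eq_left.2 (h.block_subset hC)
  rw [himg]
  exact Finset.erase_eq_of_notMem h.2.1

/-- Inserting a new singleton block. -/
lemma isPartOn_insert_singleton {s : Finset α} {P : Finset (Finset α)} (h : IsPartOn s P)
    {a : α} (ha : a ∉ s) : IsPartOn (insert a s) (insert {a} P) := by
  refine ⟨?_, ?_, ?_⟩
  · intro B hB
    rcases Finset.mem_insert.1 hB with rfl | hB
    · exact Finset.singleton_subset_iff.2 (Finset.mem_insert_self a s)
    · exact (h.block_subset hB).trans (Finset.subset_insert a s)
  · intro hB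
    rcases Finset.mem_insert.1 hB with h' | h'
    · exact absurd h'.symm (Finset.singleton_ne_empty a)
    · exact h.2.1 h'
  · intro x hx
    rcases Finset.mem_insert.1 hx with rfl | hx2
    · refine ⟨{x}, ⟨Finset.mem_insert_self _ _, Finset.mem_singleton_self x⟩, ?_⟩
      rintro D ⟨hD, hxD⟩
      rcases Finset.mem_insert.1 hD with rfl | hD2
      · rfl
      · exact absurd (h.block_subset hD2 hxD) ha
    · obtain ⟨B, ⟨hB, hxB⟩, hu⟩ := h.2.2 x hx2
      refine ⟨B, ⟨Finset.mem_insert_of_mem hB, hxB⟩, ?_⟩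
      rintro D ⟨hD, hxD⟩
      rcases Finset.mem_insert.1 hD with rfl | hD2
      · rw [Finset.mem_singleton] at hxD
        exact absurd (hxD ▸ hx2) ha
      · exact hu D ⟨hD2, hxD⟩

/-- Inserting a new element into an existing block. -/
lemma isPartOn_insert_block {s : Finset α} {P : Finset (Finset α)} (h : IsPartOn s P)
    {a : α} (ha : a ∉ s) {C : Finset α} (hC : C ∈ P) :
    IsPartOn (insert a s) (insert (insert a C) (P.erase C)) := by
  refine ⟨?_, ?_, ?_⟩
  · intro B hB
    rcases Finset.mem_insert.1 hB with rfl | hB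
    · exact Finset.insert_subset_insert a (h.block_subset hC)
    · exact (h.block_subset (Finset.mem_of_mem_erase hB)).trans (Finset.subset_insert a s)
  · intro hB
    rcases Finset.mem_insert.1 hB with h' | h'
    · exact absurd h'.symm (Finset.insert_ne_empty a C)
    · exact h.2.1 (Finset.mem_of_mem_erase h')
  · intro x hx
    rcases Finset.mem_insert.1 hx with rfl | hx2
    · refine ⟨insert x C, ⟨Finset.mem_insert_self _ _, Finset.mem_insert_self x C⟩, ?_⟩
      rintro D ⟨hD, hxD⟩
      rcases Finset.mem_insert.1 hD with rfl | hD2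
      · rfl
      · exact absurd (h.block_subset (Finset.mem_of_mem_erase hD2) hxD) ha
    · obtain ⟨B, ⟨hB, hxB⟩, hu⟩ := h.2.2 x hx2
      by_cases hBC : B = C
      · subst hBC
        refine ⟨insert a B, ⟨Finset.mem_insert_self _ _, Finset.mem_insert_of_mem hxB⟩, ?_⟩
        rintro D ⟨hD, hxD⟩
        rcases Finset.mem_insert.1 hD with rfl | hD2
        · rfl
        · exact absurd (hu D ⟨Finset.mem_of_mem_erase hD2, hxD⟩)
            (Finset.ne_of_mem_erase hD2)
      · refine ⟨B, ⟨Finset.mem_insert_of_mem (Finset.mem_erase.2 ⟨hBC, hB⟩), hxB⟩, ?_⟩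
        rintro D ⟨hD, hxD⟩
        rcases Finset.mem_insert.1 hD with rfl | hD2
        · rcases Finset.mem_insert.1 hxD with h3 | hxD2
          · exact absurd (h3 ▸ hx2) ha
          · exact absurd (hu C ⟨hC, hxD2⟩) (Ne.symm hBC)
        · exact hu D ⟨Finset.mem_of_mem_erase hD2, hxD⟩

lemma singleton_not_mem {s : Finset α} {P : Finset (Finset α)} (h : IsPartOn s P)
    {a : α} (ha : a ∉ s) : {a} ∉ P :=
  fun hm => h.not_mem_block ha hm (Finset.mem_singleton_self a)

lemma insert_not_mem_erase {s : Finset α} {P : Finset (Finset α)} (h : IsPartOn s P)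
    {a : α} (ha : a ∉ s) {C D : Finset α} (hD : D ∈ P.erase C) : insert a C ≠ D :=
  fun he => h.not_mem_block ha (Finset.mem_of_mem_erase hD) (he ▸ Finset.mem_insert_self a C)

lemma restrict_insert_singleton {P : Finset (Finset α)} {t : Finset α} {a : α} (ha : a ∉ t) :
    restrictPart (insert {a} P) t = restrictPart P t := by
  ext B
  simp only [restrictPart, Finset.mem_erase, Finset.mem_image, Finset.mem_insert]
  constructor
  · rintro ⟨hne, C, (rfl | hC), rfl⟩
    · exact absurd (Finset.singleton_inter_of_notMem ha) hne
    · exact ⟨hne, C, hC, rfl⟩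
  · rintro ⟨hne, C, hC, rfl⟩
    exact ⟨hne, C, Or.inr hC, rfl⟩

lemma restrict_insert_block {P : Finset (Finset α)} {C t : Finset α} {a : α} (ha : a ∉ t)
    (hC : C ∈ P) :
    restrictPart (insert (insert a C) (P.erase C)) t = restrictPart P t := by
  have hiC : insert a C ∩ t = C ∩ t := Finset.insert_inter_of_notMem ha
  ext B
  simp only [restrictPart, Finset.mem_erase, Finset.mem_image, Finset.mem_insert]
  constructor
  · rintro ⟨hne, D, (rfl | hD), rfl⟩
    · exact ⟨hne, C, hC, hiC.symm⟩
    · exact ⟨hne, D, hD.2, rfl⟩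
  · rintro ⟨hne, D, hD, rfl⟩
    by_cases hDC : D = C
    · subst hDC
      exact ⟨hne, insert a D, Or.inl rfl, hiC⟩
    · exact ⟨hne, D, Or.inr ⟨hDC, hD⟩, rfl⟩

lemma erase_sub_inter_eq {s : Finset α} {ρ : Finset (Finset α)} {a : α}
    (h : IsPartOn (insert a s) ρ) (ha : a ∉ s) {B₀ : Finset α} (hB₀ : B₀ ∈ ρ) (haB₀ : a ∈ B₀)
    {B : Finset α} (hB : B ∈ ρ.erase B₀) : B ∩ s = B := by
  apply Finset.inter_eq_left.2
  intro x hx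
  have hxs : x ∈ insert a s := h.block_subset (Finset.mem_of_mem_erase hB) hx
  rcases Finset.mem_insert.1 hxs with rfl | hxs2
  · exact absurd (h.eq_of_mem (Finset.mem_of_mem_erase hB) hB₀ hx haB₀)
      (Finset.ne_of_mem_erase hB)
  · exact hxs2

lemma image_inter_eq {s : Finset α} {ρ : Finset (Finset α)} {a : α}
    (h : IsPartOn (insert a s) ρ) (ha : a ∉ s) {B₀ : Finset α} (hB₀ : B₀ ∈ ρ) (haB₀ : a ∈ B₀) :
    ρ.image (fun C => C ∩ s) = insert (B₀ ∩ s) ((ρ.erase B₀).image id) := by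
  conv_lhs => rw [← Finset.insert_erase hB₀]
  rw [Finset.image_insert]
  congr 1
  apply Finset.image_congr
  intro B hB
  exact erase_sub_inter_eq h ha hB₀ haB₀ hB

lemma restrict_of_part_insert {s : Finset α} {ρ : Finset (Finset α)} {a : α}
    (h : IsPartOn (insert a s) ρ) (ha : a ∉ s) {B₀ : Finset α} (hB₀ : B₀ ∈ ρ) (haB₀ : a ∈ B₀) :
    restrictPart ρ s = if B₀ ∩ s = ∅ then ρ.erase B₀ else insert (B₀ ∩ s) (ρ.erase B₀) := by
  have hempty : ∅ ∉ ρ.erase B₀ := fun hm => h.2.1 (Finset.mem_of_mem_erase hm)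
  rw [restrictPart, image_inter_eq h ha hB₀ haB₀, Finset.image_id]
  split <;> rename_i hcase
  · rw [hcase, Finset.erase_insert hempty]
  · apply Finset.erase_eq_of_notMem
    intro hm
    rcases Finset.mem_insert.1 hm with h' | h'
    · exact hcase h'.symm
    · exact hempty h'

lemma blockOf_inter_not_mem_erase {s : Finset α} {ρ : Finset (Finset α)} {a : α}
    (h : IsPartOn (insert a s) ρ) (ha : a ∉ s) {B₀ : Finset α} (hB₀ : B₀ ∈ ρ) (haB₀ : a ∈ B₀) :
    B₀ ∩ s ∉ ρ.erase B₀ := by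
  intro hm
  rcases Finset.eq_empty_or_nonempty (B₀ ∩ s) with he | ⟨x, hx⟩
  · exact h.2.1 (he ▸ Finset.mem_of_mem_erase hm)
  · have := h.eq_of_mem (Finset.mem_of_mem_erase hm) hB₀ hx (Finset.mem_inter.1 hx).1
    exact (Finset.ne_of_mem_erase hm) this

lemma insert_blockOf_inter {s : Finset α} {ρ : Finset (Finset α)} {a : α}
    (h : IsPartOn (insert a s) ρ) (ha : a ∉ s) {B₀ : Finset α} (hB₀ : B₀ ∈ ρ) (haB₀ : a ∈ B₀) :
    insert a (B₀ ∩ s) = B₀ := by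
  ext b
  simp only [Finset.mem_insert, Finset.mem_inter]
  constructor
  · rintro (rfl | ⟨hb, -⟩)
    · exact haB₀
    · exact hb
  · intro hb
    rcases Finset.mem_insert.1 (h.block_subset hB₀ hb) with rfl | hbs
    · exact Or.inl rfl
    · exact Or.inr ⟨hb, hbs⟩

lemma block_eq_singleton {s : Finset α} {ρ : Finset (Finset α)} {a : α}
    (h : IsPartOn (insert a s) ρ) (ha : a ∉ s) {B₀ : Finset α} (hB₀ : B₀ ∈ ρ) (haB₀ : a ∈ B₀)
    (hcase : B₀ ∩ s = ∅) : B₀ = {a} := by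
  rw [← insert_blockOf_inter h ha hB₀ haB₀, hcase]
  rfl

/-- Weight and cardinality bookkeeping. -/
lemma wprod_insert_singleton {s : Finset α} {P : Finset (Finset α)} (h : IsPartOn s P)
    {a : α} (ha : a ∉ s) (σ : ℝ) : wprod σ (insert {a} P) = wprod σ P := by
  rw [wprod, Finset.prod_insert (singleton_not_mem h ha), wprod]
  simp [risingFac_zero]

lemma card_insert_singleton {s : Finset α} {P : Finset (Finset α)} (h : IsPartOn s P)
    {a : α} (ha : a ∉ s) : (insert {a} P).card = P.card + 1 :=
  Finset.card_insert_of_notMem (singleton_not_mem h ha)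

lemma wprod_insert_block {s : Finset α} {P : Finset (Finset α)} (h : IsPartOn s P)
    {a : α} (ha : a ∉ s) {C : Finset α} (hC : C ∈ P) (σ : ℝ) :
    wprod σ (insert (insert a C) (P.erase C)) = ((C.card : ℝ) - σ) * wprod σ P := by
  have hnm : insert a C ∉ P.erase C := fun hm => insert_not_mem_erase h ha hm rfl
  rw [wprod, Finset.prod_insert hnm]
  have hcard : (insert a C).card = C.card + 1 :=
    Finset.card_insert_of_notMem (h.not_mem_block ha hC)
  obtain ⟨c, hc⟩ : ∃ c, C.card = c + 1 :=
    Nat.exists_eq_succ_of_ne_zero (Finset.card_ne_zero.2 (h.block_nonempty hC))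
  have hw : wprod σ P = risingFac (1 - σ) (C.card - 1) * ∏ D ∈ P.erase C,
      risingFac (1 - σ) (D.card - 1) := (Finset.mul_prod_erase P _ hC).symm
  rw [hw, hcard, hc]
  have : risingFac (1 - σ) (c + 1 + 1 - 1) = risingFac (1 - σ) (c + 1 - 1) * ((c + 1 : ℕ) - σ) := by
    show risingFac (1 - σ) (c + 1) = risingFac (1 - σ) c * _
    rw [risingFac_succ]
    push_cast
    ring
  rw [this]
  push_cast
  ring

lemma card_insert_block {s : Finset α} {P : Finset (Finset α)} (h : IsPartOn s P)
    {a : α} (ha : a ∉ s) {C : Finset α} (hC : C ∈ P) :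
    (insert (insert a C) (P.erase C)).card = P.card := by
  have hnm : insert a C ∉ P.erase C := fun hm => insert_not_mem_erase h ha hm rfl
  rw [Finset.card_insert_of_notMem hnm, Finset.card_erase_of_mem hC]
  have : 0 < P.card := Finset.card_pos.2 ⟨C, hC⟩
  omega

lemma mem_insert_singleton_iff {s : Finset α} {P : Finset (Finset α)} (h : IsPartOn s P)
    {a : α} (ha : a ∉ s) {B : Finset α} (hBa : a ∉ B) :
    B ∈ insert {a} P ↔ B ∈ P := by
  constructor
  · intro hm
    rcases Finset.mem_insert.1 hm with rfl | hm2
    · exact absurd (Finset.mem_singleton_self a) hBa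
    · exact hm2
  · exact Finset.mem_insert_of_mem

lemma mem_insert_block_iff {s : Finset α} {P : Finset (Finset α)} (h : IsPartOn s P)
    {a : α} (ha : a ∉ s) {C : Finset α} (hC : C ∈ P) {B : Finset α} (hBa : a ∉ B) :
    B ∈ insert (insert a C) (P.erase C) ↔ (B ∈ P ∧ B ≠ C) := by
  constructor
  · intro hm
    rcases Finset.mem_insert.1 hm with rfl | hm2
    · exact absurd (Finset.mem_insert_self a C) hBa
    · exact ⟨Finset.mem_of_mem_erase hm2, Finset.ne_of_mem_erase hm2⟩
  · rintro ⟨hm, hne⟩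
    exact Finset.mem_insert_of_mem (Finset.mem_erase.2 ⟨hne, hm⟩)

lemma partsOn_empty : partsOn (∅ : Finset α) = {(∅ : Finset (Finset α))} := by
  ext P
  simp only [mem_partsOn, Finset.mem_singleton]
  constructor
  · intro h
    rw [Finset.eq_empty_iff_forall_notMem]
    intro B hB
    have := h.block_subset hB
    have hemp : B = ∅ := Finset.subset_empty.1 this
    exact h.2.1 (hemp ▸ hB)
  · rintro rfl
    exact ⟨fun B hB => absurd hB (Finset.notMem_empty B),
      Finset.notMem_empty ∅, fun x hx => absurd hx (Finset.notMem_empty x)⟩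

/-- The key structural lemma: summing over partitions of `insert a s`. -/
lemma sum_partsOn_insert {s : Finset α} {a : α} (ha : a ∉ s) (f : Finset (Finset α) → ℝ) :
    ∑ ρ ∈ partsOn (insert a s), f ρ =
      ∑ P ∈ partsOn s,
        (f (insert {a} P) + ∑ C ∈ P, f (insert (insert a C) (P.erase C))) := by
  classical
  have hsigma : ∑ P ∈ partsOn s,
      (f (insert {a} P) + ∑ C ∈ P, f (insert (insert a C) (P.erase C)))
      = ∑ p ∈ (partsOn s).sigma (fun P => insert (∅ : Finset α) P),
          f (if p.2 = ∅ then insert {a} p.1 else insert (insert a p.2) (p.1.erase p.2)) := by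
    rw [Finset.sum_sigma]
    apply Finset.sum_congr rfl
    intro P hP
    have hP' : IsPartOn s P := mem_partsOn.1 hP
    rw [Finset.sum_insert hP'.2.1, if_pos rfl]
    congr 1
    apply Finset.sum_congr rfl
    intro C hC
    rw [if_neg (hP'.block_ne_empty hC)]
  rw [hsigma]
  apply Finset.sum_nbij' (i := fun ρ => (⟨restrictPart ρ s, blockOf ρ a ∩ s⟩ :
      (_ : Finset (Finset α)) × Finset α))
    (j := fun p => if p.2 = ∅ then insert {a} p.1 else insert (insert a p.2) (p.1.erase p.2))
  · -- hi
    intro ρ hρ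
    have h := mem_partsOn.1 hρ
    obtain ⟨hB₀, haB₀⟩ := blockOf_spec h (Finset.mem_insert_self a s)
    rw [Finset.mem_sigma]
    refine ⟨mem_partsOn.2 (restrict_isPartOn h (Finset.subset_insert a s)), ?_⟩
    rcases Finset.eq_empty_or_nonempty (blockOf ρ a ∩ s) with he | hne
    · rw [he]; exact Finset.mem_insert_self _ _
    · apply Finset.mem_insert_of_mem
      exact mem_restrictPart.2 ⟨Finset.nonempty_iff_ne_empty.1 hne, _, hB₀, rfl⟩
  · -- hj
    rintro ⟨P, c⟩ hp
    rw [Finset.mem_sigma] at hp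
    obtain ⟨hP, hc⟩ := hp
    have hP' : IsPartOn s P := mem_partsOn.1 hP
    rcases Finset.mem_insert.1 hc with rfl | hc2
    · rw [if_pos rfl]
      exact mem_partsOn.2 (isPartOn_insert_singleton hP' ha)
    · rw [if_neg (hP'.block_ne_empty hc2)]
      exact mem_partsOn.2 (isPartOn_insert_block hP' ha hc2)
  · -- left inverse
    intro ρ hρ
    have h := mem_partsOn.1 hρ
    obtain ⟨hB₀, haB₀⟩ := blockOf_spec h (Finset.mem_insert_self a s)
    set B₀ := blockOf ρ a with hB₀def
    simp only
    rcases Finset.eq_empty_or_nonempty (B₀ ∩ s) with he | hne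
    · rw [if_pos he, restrict_of_part_insert h ha hB₀ haB₀, if_pos he]
      have hsing : B₀ = {a} := block_eq_singleton h ha hB₀ haB₀ he
      rw [← hsing, Finset.insert_erase hB₀]
    · rw [if_neg (Finset.nonempty_iff_ne_empty.1 hne),
        restrict_of_part_insert h ha hB₀ haB₀,
        if_neg (Finset.nonempty_iff_ne_empty.1 hne)]
      rw [Finset.erase_insert (blockOf_inter_not_mem_erase h ha hB₀ haB₀)]
      rw [insert_blockOf_inter h ha hB₀ haB₀, Finset.insert_erase hB₀]
  · -- right inverse
    rintro ⟨P, c⟩ hp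
    rw [Finset.mem_sigma] at hp
    obtain ⟨hP, hc⟩ := hp
    have hP' : IsPartOn s P := mem_partsOn.1 hP
    rcases Finset.mem_insert.1 hc with rfl | hc2
    · rw [if_pos rfl]
      have h1 : restrictPart (insert {a} P) s = P := by
        rw [restrict_insert_singleton ha, restrict_self hP']
      have h2 : blockOf (insert {a} P) a = {a} :=
        blockOf_eq (isPartOn_insert_singleton hP' ha) (Finset.mem_insert_self _ _)
          (Finset.mem_singleton_self a)
      refine Sigma.ext h1 (heq_of_eq ?_)
      show blockOf (insert {a} P) a ∩ s = ∅
      rw [h2, Finset.singleton_inter_of_notMem ha]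
    · rw [if_neg (hP'.block_ne_empty hc2)]
      have h1 : restrictPart (insert (insert a c) (P.erase c)) s = P := by
        rw [restrict_insert_block ha hc2, restrict_self hP']
      have h2 : blockOf (insert (insert a c) (P.erase c)) a = insert a c :=
        blockOf_eq (isPartOn_insert_block hP' ha hc2) (Finset.mem_insert_self _ _)
          (Finset.mem_insert_self a c)
      refine Sigma.ext h1 (heq_of_eq ?_)
      show blockOf (insert (insert a c) (P.erase c)) a ∩ s = c
      rw [h2, Finset.insert_inter_of_notMem ha,
        Finset.inter_eq_left.2 (hP'.block_subset hc2)]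
  · -- values
    intro ρ hρ
    have h := mem_partsOn.1 hρ
    obtain ⟨hB₀, haB₀⟩ := blockOf_spec h (Finset.mem_insert_self a s)
    set B₀ := blockOf ρ a with hB₀def
    simp only
    rcases Finset.eq_empty_or_nonempty (B₀ ∩ s) with he | hne
    · rw [if_pos he, restrict_of_part_insert h ha hB₀ haB₀, if_pos he]
      have hsing : B₀ = {a} := block_eq_singleton h ha hB₀ haB₀ he
      rw [← hsing, Finset.insert_erase hB₀]
    · rw [if_neg (Finset.nonempty_iff_ne_empty.1 hne),
        restrict_of_part_insert h ha hB₀ haB₀,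
        if_neg (Finset.nonempty_iff_ne_empty.1 hne)]
      rw [Finset.erase_insert (blockOf_inter_not_mem_erase h ha hB₀ haB₀)]
      rw [insert_blockOf_inter h ha hB₀ haB₀, Finset.insert_erase hB₀]

/-- Sum of `wprod` over partitions of `s` with `j` blocks. -/
def Sval (σ : ℝ) (s : Finset α) (j : ℕ) : ℝ :=
  ∑ P ∈ (partsOn s).filter (fun P => P.card = j), wprod σ P

lemma Sval_eq_gP (σ : ℝ) (s : Finset α) : ∀ j : ℕ, Sval σ s j = gP σ s.card j := by
  induction s using Finset.induction_on with
  | empty =>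
      intro j
      rw [Sval, partsOn_empty, Finset.filter_singleton]
      match j with
      | 0 =>
        rw [if_pos (by simp), Finset.sum_singleton]
        simp [wprod]
      | j + 1 =>
        rw [if_neg (by simp)]
        simp
  | @insert a s ha ih =>
      intro j
      rw [Sval, Finset.sum_filter, sum_partsOn_insert ha]
      have hstep : ∀ P ∈ partsOn s,
          ((if (insert {a} P).card = j then wprod σ (insert {a} P) else 0) +
            ∑ C ∈ P, (if (insert (insert a C) (P.erase C)).card = j then
              wprod σ (insert (insert a C) (P.erase C)) else 0))
          = (if P.card + 1 = j then wprod σ P else 0) +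
            (if P.card = j then ((s.card : ℝ) - P.card * σ) * wprod σ P else 0) := by
        intro P hP
        have h := mem_partsOn.1 hP
        rw [card_insert_singleton h ha, wprod_insert_singleton h ha]
        congr 1
        have hin : ∀ C ∈ P, (if (insert (insert a C) (P.erase C)).card = j then
            wprod σ (insert (insert a C) (P.erase C)) else 0)
            = (if P.card = j then ((C.card : ℝ) - σ) * wprod σ P else 0) := by
          intro C hC
          rw [card_insert_block h ha hC, wprod_insert_block h ha hC]
        rw [Finset.sum_congr rfl hin]
        by_cases hcard : P.card = j
        · rw [if_pos hcard]
          simp only [if_pos hcard]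
          rw [← Finset.sum_mul, ← h.sum_card]
          congr 1
          rw [Finset.sum_sub_distrib, Finset.sum_const, nsmul_eq_mul]
          push_cast
          ring
        · simp [hcard]
      rw [Finset.sum_congr rfl hstep, Finset.sum_add_distrib]
      rw [Finset.card_insert_of_notMem ha]
      match j with
      | 0 =>
        simp only [Nat.add_one_ne_zero, if_false, Finset.sum_const_zero, zero_add]
        rw [← Finset.sum_filter, gP_succ_zero]
        have : ∀ P ∈ (partsOn s).filter (fun P => P.card = 0), wprod σ P = 0 → True := fun _ _ _ => trivial
        have hz : ∑ P ∈ (partsOn s).filter (fun P => P.card = 0),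
            ((s.card : ℝ) - P.card * σ) * wprod σ P = (s.card : ℝ) * Sval σ s 0 := by
          rw [Sval, Finset.mul_sum]
          apply Finset.sum_congr rfl
          intro P hP
          have : P.card = 0 := (Finset.mem_filter.1 hP).2
          rw [this]
          push_cast
          ring
        rw [hz, ih 0]
        match hN : s.card with
        | 0 => simp
        | N + 1 => simp
      | j + 1 =>
        rw [gP_succ_succ]
        congr 1
        · rw [← ih j, Sval, Finset.sum_filter]
          apply Finset.sum_congr rfl
          intro P _
          by_cases hc : P.card = j
          · rw [if_pos hc, if_pos (by omega)]
          · rw [if_neg hc, if_neg (by omega)]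
        · rw [← ih (j + 1), Sval, Finset.mul_sum, Finset.sum_filter]
          apply Finset.sum_congr rfl
          intro P _
          by_cases hc : P.card = j + 1
          · rw [if_pos hc, if_pos hc, hc]
            push_cast
            ring
          · rw [if_neg hc, if_neg hc]

lemma EPV_succ_new {σ θ : ℝ} (N k : ℕ) (hθN : θ + (N : ℝ) ≠ 0) :
    EPV σ θ (N + 1) (k + 1) * (θ + N) = EPV σ θ N k * (θ + (k : ℝ) * σ) := by
  simp only [EPV, risingFac_succ, Finset.prod_range_succ]
  rcases eq_or_ne (risingFac θ N) 0 with hr | hr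
  · simp [hr]
  · field_simp
    simp only [mul_comm σ]
    ring

lemma EPV_succ_old {σ θ : ℝ} (N k : ℕ) (hθN : θ + (N : ℝ) ≠ 0) :
    EPV σ θ (N + 1) k * (θ + N) = EPV σ θ N k := by
  simp only [EPV, risingFac_succ]
  rcases eq_or_ne (risingFac θ N) 0 with hr | hr
  · simp [hr]
  · field_simp
    simp only [mul_comm σ]

/-- Total-mass step: inserting one new element preserves the conditional mass. -/
lemma extSum_step_total {old s : Finset α} {π' : Finset (Finset α)} {a : α} {σ θ : ℝ}
    (ha : a ∉ s) (ha' : a ∉ old) (hθN : θ + (s.card : ℝ) ≠ 0) :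
    ∑ ρ ∈ (partsOn (insert a s)).filter (fun ρ => restrictPart ρ old = π'),
        EPV σ θ (insert a s).card ρ.card * wprod σ ρ
    = ∑ P ∈ (partsOn s).filter (fun P => restrictPart P old = π'),
        EPV σ θ s.card P.card * wprod σ P := by
  rw [Finset.sum_filter, Finset.sum_filter, sum_partsOn_insert ha]
  rw [Finset.card_insert_of_notMem ha]
  apply Finset.sum_congr rfl
  intro P hP
  have h := mem_partsOn.1 hP
  rw [restrict_insert_singleton ha']
  have hin : ∀ C ∈ P, (if restrictPart (insert (insert a C) (P.erase C)) old = π' then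
      EPV σ θ (s.card + 1) (insert (insert a C) (P.erase C)).card *
        wprod σ (insert (insert a C) (P.erase C)) else 0)
      = (if restrictPart P old = π' then
          EPV σ θ (s.card + 1) P.card * (((C.card : ℝ) - σ) * wprod σ P) else 0) := by
    intro C hC
    rw [restrict_insert_block ha' hC, card_insert_block h ha hC, wprod_insert_block h ha hC]
  rw [Finset.sum_congr rfl hin]
  by_cases hres : restrictPart P old = π'
  · simp only [if_pos hres]
    rw [card_insert_singleton h ha, wprod_insert_singleton h ha]
    have hsum : ∑ C ∈ P, EPV σ θ (s.card + 1) P.card * (((C.card : ℝ) - σ) * wprod σ P)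
        = EPV σ θ (s.card + 1) P.card * (((s.card : ℝ) - P.card * σ) * wprod σ P) := by
      rw [← Finset.mul_sum, ← Finset.sum_mul]
      congr 2
      rw [Finset.sum_sub_distrib, Finset.sum_const, nsmul_eq_mul, ← h.sum_card]
      push_cast
      ring
    rw [hsum]
    apply mul_right_cancel₀ hθN
    have e1 := EPV_succ_new (σ := σ) (θ := θ) s.card P.card hθN
    have e2 := EPV_succ_old (σ := σ) (θ := θ) s.card P.card hθN
    linear_combination (wprod σ P) * e1 +
      (((s.card : ℝ) - P.card * σ) * wprod σ P) * e2
  · simp [hres]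

/-- Avoidance step: mass of partitions keeping block `B` untouched. -/
lemma extSum_step_avoid {old s : Finset α} {π' : Finset (Finset α)} {B : Finset α} {a : α}
    {σ θ : ℝ} (ha : a ∉ s) (ha' : a ∉ old) (haB : a ∉ B) (hBne : B ≠ ∅)
    (hθN : θ + (s.card : ℝ) ≠ 0) :
    (∑ ρ ∈ (partsOn (insert a s)).filter (fun ρ => restrictPart ρ old = π' ∧ B ∈ ρ),
        EPV σ θ (insert a s).card ρ.card * wprod σ ρ) * (θ + (s.card : ℝ))
    = (∑ P ∈ (partsOn s).filter (fun P => restrictPart P old = π' ∧ B ∈ P),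
        EPV σ θ s.card P.card * wprod σ P) * (θ + (s.card : ℝ) - B.card + σ) := by
  rw [Finset.sum_filter, Finset.sum_filter, sum_partsOn_insert ha]
  rw [Finset.card_insert_of_notMem ha, Finset.sum_mul, Finset.sum_mul]
  apply Finset.sum_congr rfl
  intro P hP
  have h := mem_partsOn.1 hP
  rw [restrict_insert_singleton ha']
  have hmem1 : B ∈ insert {a} P ↔ B ∈ P := mem_insert_singleton_iff h ha haB
  have hin : ∀ C ∈ P, (if restrictPart (insert (insert a C) (P.erase C)) old = π' ∧
        B ∈ insert (insert a C) (P.erase C) then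
      EPV σ θ (s.card + 1) (insert (insert a C) (P.erase C)).card *
        wprod σ (insert (insert a C) (P.erase C)) else 0)
      = (if (restrictPart P old = π' ∧ B ∈ P) ∧ B ≠ C then
          EPV σ θ (s.card + 1) P.card * (((C.card : ℝ) - σ) * wprod σ P) else 0) := by
    intro C hC
    rw [restrict_insert_block ha' hC, card_insert_block h ha hC, wprod_insert_block h ha hC]
    have : (restrictPart P old = π' ∧ B ∈ insert (insert a C) (P.erase C)) ↔
        ((restrictPart P old = π' ∧ B ∈ P) ∧ B ≠ C) := by
      rw [mem_insert_block_iff h ha hC haB]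
      tauto
    rw [if_congr this rfl rfl]
  rw [Finset.sum_congr rfl hin]
  by_cases hres : restrictPart P old = π' ∧ B ∈ P
  · have hcond1 : restrictPart P old = π' ∧ B ∈ insert {a} P := ⟨hres.1, hmem1.2 hres.2⟩
    rw [if_pos hcond1, if_pos hres]
    rw [card_insert_singleton h ha, wprod_insert_singleton h ha]
    have hin2 : ∀ C ∈ P, (if (restrictPart P old = π' ∧ B ∈ P) ∧ B ≠ C then
        EPV σ θ (s.card + 1) P.card * (((C.card : ℝ) - σ) * wprod σ P) else 0)
        = (if C ≠ B then EPV σ θ (s.card + 1) P.card * (((C.card : ℝ) - σ) * wprod σ P)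
            else 0) := by
      intro C hC
      by_cases hCB : C = B
      · rw [if_neg (by tauto), if_neg (by tauto)]
      · rw [if_pos ⟨hres, Ne.symm hCB⟩, if_pos hCB]
    rw [Finset.sum_congr rfl hin2, ← Finset.sum_filter, Finset.filter_ne']
    have hsum : ∑ C ∈ P.erase B, EPV σ θ (s.card + 1) P.card * (((C.card : ℝ) - σ) * wprod σ P)
        = EPV σ θ (s.card + 1) P.card *
          ((((s.card : ℝ) - B.card) - (P.card - 1) * σ) * wprod σ P) := by
      rw [← Finset.mul_sum, ← Finset.sum_mul]
      congr 2
      rw [Finset.sum_sub_distrib, Finset.sum_const, nsmul_eq_mul,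
        Finset.card_erase_of_mem hres.2]
      have hsc : ∑ C ∈ P.erase B, (C.card : ℝ) = (s.card : ℝ) - B.card := by
        have := Finset.sum_erase_add P (fun C => (C.card : ℝ)) hres.2
        have htot : ∑ C ∈ P, (C.card : ℝ) = (s.card : ℝ) := by
          rw [← h.sum_card]; push_cast; ring
        linarith
      rw [hsc]
      have hk : (1 : ℕ) ≤ P.card := Finset.card_pos.2 ⟨B, hres.2⟩
      push_cast [Nat.cast_sub hk]
      ring
    rw [hsum]
    have e1 := EPV_succ_new (σ := σ) (θ := θ) s.card P.card hθN
    have e2 := EPV_succ_old (σ := σ) (θ := θ) s.card P.card hθN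
    have hk : (1 : ℕ) ≤ P.card := Finset.card_pos.2 ⟨B, hres.2⟩
    have hkc : (1 : ℝ) ≤ (P.card : ℝ) := by exact_mod_cast hk
    linear_combination (wprod σ P) * e1 +
      ((((s.card : ℝ) - B.card) - (P.card - 1) * σ) * wprod σ P) * e2
  · have hcond1 : ¬ (restrictPart P old = π' ∧ B ∈ insert {a} P) := by
      rw [hmem1]; exact hres
    rw [if_neg hcond1, if_neg hres]
    simp only [hres, false_and, if_false, and_false]
    simp

lemma isPartOn_erase {t : Finset α} {P : Finset (Finset α)} (h : IsPartOn t P)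
    {B : Finset α} (hB : B ∈ P) : IsPartOn (t \ B) (P.erase B) := by
  refine ⟨?_, ?_, ?_⟩
  · intro D hD
    intro x hx
    rw [Finset.mem_sdiff]
    refine ⟨h.block_subset (Finset.mem_of_mem_erase hD) hx, ?_⟩
    intro hxB
    exact (Finset.ne_of_mem_erase hD) (h.eq_of_mem (Finset.mem_of_mem_erase hD) hB hx hxB)
  · intro hm
    exact h.2.1 (Finset.mem_of_mem_erase hm)
  · intro x hx
    rw [Finset.mem_sdiff] at hx
    obtain ⟨D, ⟨hD, hxD⟩, hu⟩ := h.2.2 x hx.1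
    have hDB : D ≠ B := fun he => hx.2 (he ▸ hxD)
    refine ⟨D, ⟨Finset.mem_erase.2 ⟨hDB, hD⟩, hxD⟩, ?_⟩
    rintro E ⟨hE, hxE⟩
    exact hu E ⟨Finset.mem_of_mem_erase hE, hxE⟩

lemma isPartOn_insert_sdiff {t B : Finset α} {P : Finset (Finset α)}
    (h : IsPartOn (t \ B) P) (hBt : B ⊆ t) (hBne : B ≠ ∅) : IsPartOn t (insert B P) := by
  refine ⟨?_, ?_, ?_⟩
  · intro D hD
    rcases Finset.mem_insert.1 hD with rfl | hD2
    · exact hBt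
    · exact (h.block_subset hD2).trans (Finset.sdiff_subset)
  · intro hm
    rcases Finset.mem_insert.1 hm with h' | h'
    · exact hBne h'.symm
    · exact h.2.1 h'
  · intro x hx
    by_cases hxB : x ∈ B
    · refine ⟨B, ⟨Finset.mem_insert_self _ _, hxB⟩, ?_⟩
      rintro D ⟨hD, hxD⟩
      rcases Finset.mem_insert.1 hD with rfl | hD2
      · rfl
      · have := h.block_subset hD2 hxD
        rw [Finset.mem_sdiff] at this
        exact absurd hxB this.2
    · obtain ⟨D, ⟨hD, hxD⟩, hu⟩ := h.2.2 x (Finset.mem_sdiff.2 ⟨hx, hxB⟩)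
      refine ⟨D, ⟨Finset.mem_insert_of_mem hD, hxD⟩, ?_⟩
      rintro E ⟨hE, hxE⟩
      rcases Finset.mem_insert.1 hE with rfl | hE2
      · exact absurd hxE hxB
      · exact hu E ⟨hE2, hxE⟩

lemma not_mem_self_sdiff {t B : Finset α} {P : Finset (Finset α)}
    (h : IsPartOn (t \ B) P) (hBne : B ≠ ∅) : B ∉ P := by
  intro hm
  obtain ⟨x, hx⟩ := Finset.nonempty_iff_ne_empty.2 hBne
  have := h.block_subset hm hx
  rw [Finset.mem_sdiff] at this
  exact this.2 hx

/-- Sum over partitions with a marked block. -/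
lemma sum_marked (σ : ℝ) (old : Finset α) (j : ℕ) (hj : 1 ≤ j) (F : Finset α → ℝ) :
    ∑ π' ∈ (partsOn old).filter (fun P => P.card = j), (∑ B ∈ π', F B) * wprod σ π'
    = ∑ B ∈ old.powerset.filter (fun B => B ≠ ∅),
        F B * risingFac (1 - σ) (B.card - 1) * Sval σ (old \ B) (j - 1) := by
  classical
  have hL : ∑ π' ∈ (partsOn old).filter (fun P => P.card = j), (∑ B ∈ π', F B) * wprod σ π'
      = ∑ p ∈ ((partsOn old).filter (fun P => P.card = j)).sigma (fun π' => π'),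
          F p.2 * wprod σ p.1 := by
    rw [Finset.sum_sigma]
    apply Finset.sum_congr rfl
    intro π' _
    rw [Finset.sum_mul]
  have hR : ∑ B ∈ old.powerset.filter (fun B => B ≠ ∅),
        F B * risingFac (1 - σ) (B.card - 1) * Sval σ (old \ B) (j - 1)
      = ∑ p ∈ (old.powerset.filter (fun B => B ≠ ∅)).sigma
            (fun B => (partsOn (old \ B)).filter (fun P => P.card = j - 1)),
          F p.1 * risingFac (1 - σ) (p.1.card - 1) * wprod σ p.2 := by
    rw [Finset.sum_sigma]
    apply Finset.sum_congr rfl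
    intro B _
    rw [Sval, Finset.mul_sum]
  rw [hL, hR]
  apply Finset.sum_nbij'
    (i := fun p : (_ : Finset (Finset α)) × Finset α =>
      (⟨p.2, p.1.erase p.2⟩ : (_ : Finset α) × Finset (Finset α)))
    (j := fun p : (_ : Finset α) × Finset (Finset α) =>
      (⟨insert p.1 p.2, p.1⟩ : (_ : Finset (Finset α)) × Finset α))
  · rintro ⟨π', B⟩ hp
    rw [Finset.mem_sigma] at hp
    obtain ⟨hπ, hB⟩ := hp
    rw [Finset.mem_filter] at hπ
    have h := mem_partsOn.1 hπ.1
    rw [Finset.mem_sigma]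
    constructor
    · rw [Finset.mem_filter, Finset.mem_powerset]
      exact ⟨h.block_subset hB, h.block_ne_empty hB⟩
    · rw [Finset.mem_filter]
      refine ⟨mem_partsOn.2 (isPartOn_erase h hB), ?_⟩
      rw [Finset.card_erase_of_mem hB, hπ.2]
  · rintro ⟨B, π''⟩ hp
    rw [Finset.mem_sigma] at hp
    obtain ⟨hB, hπ⟩ := hp
    rw [Finset.mem_filter, Finset.mem_powerset] at hB
    rw [Finset.mem_filter] at hπ
    have h := mem_partsOn.1 hπ.1
    rw [Finset.mem_sigma]
    constructor
    · rw [Finset.mem_filter]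
      refine ⟨mem_partsOn.2 (isPartOn_insert_sdiff h hB.1 hB.2), ?_⟩
      rw [Finset.card_insert_of_notMem (not_mem_self_sdiff h hB.2), hπ.2]
      omega
    · exact Finset.mem_insert_self _ _
  · rintro ⟨π', B⟩ hp
    rw [Finset.mem_sigma] at hp
    exact Sigma.ext (Finset.insert_erase hp.2) (by simp)
  · rintro ⟨B, π''⟩ hp
    rw [Finset.mem_sigma] at hp
    obtain ⟨hB, hπ⟩ := hp
    rw [Finset.mem_filter, Finset.mem_powerset] at hB
    rw [Finset.mem_filter] at hπ
    have h := mem_partsOn.1 hπ.1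
    exact Sigma.ext rfl (heq_of_eq (Finset.erase_insert (not_mem_self_sdiff h hB.2)))
  · rintro ⟨π', B⟩ hp
    rw [Finset.mem_sigma] at hp
    obtain ⟨hπ, hB⟩ := hp
    rw [Finset.mem_filter] at hπ
    have h := mem_partsOn.1 hπ.1
    show F B * wprod σ π' = F B * risingFac (1 - σ) (B.card - 1) * wprod σ (π'.erase B)
    rw [wprod, ← Finset.mul_prod_erase π' _ hB]
    rw [mul_assoc]
    rfl

end AuxPart




section AuxFin

lemma card_filter_lt_fin (M c : ℕ) (hc : c ≤ M) :
    ((Finset.univ : Finset (Fin M)).filter (fun x : Fin M => (x : ℕ) < c)).card = c := by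
  apply Finset.card_eq_of_bijective (fun i hi => (⟨i, lt_of_lt_of_le hi hc⟩ : Fin M))
  · intro a ha
    rw [Finset.mem_filter] at ha
    exact ⟨(a : ℕ), ha.2, Fin.ext rfl⟩
  · intro i hi
    rw [Finset.mem_filter]
    exact ⟨Finset.mem_univ _, hi⟩
  · intro i j hi hj hij
    exact congrArg Fin.val hij

/-- The `Rcnt` statistic in terms of untouched blocks. -/
lemma Rcnt_eq_sub (n m j : ℕ) (ρ : Finset (Finset (Fin (n + m))))
    (hρ : IsPartOn Finset.univ ρ) {π' : Finset (Finset (Fin (n + m)))}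
    (hres : restrictPart ρ (oldSet n m) = π') (hπ : IsPartOn (oldSet n m) π')
    (hcard : π'.card = j) :
    (Rcnt n m ρ : ℝ) = (j : ℝ) - ∑ B ∈ π', (if B ∈ ρ then (1 : ℝ) else 0) := by
  classical
  have hfilter : (restrictPart ρ (oldSet n m)).filter
      (fun Bi => ∃ C ∈ ρ, Bi ⊆ C ∧ (C \ oldSet n m) ≠ ∅)
      = π'.filter (fun Bi => Bi ∉ ρ) := by
    rw [hres]
    apply Finset.filter_congr
    intro Bi hBi
    have hBne : Bi ≠ ∅ := hπ.block_ne_empty hBi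
    have hBsub : Bi ⊆ oldSet n m := hπ.block_subset hBi
    obtain ⟨-, C₀, hC₀, hC₀e⟩ := mem_restrictPart.1 (hres ▸ hBi)
    constructor
    · rintro ⟨C, hC, hBC, hCold⟩ hBρ
      obtain ⟨x, hx⟩ := Finset.nonempty_iff_ne_empty.2 hBne
      have : Bi = C := hρ.eq_of_mem hBρ hC hx (hBC hx)
      apply hCold
      rw [← this, Finset.sdiff_eq_empty_iff_subset]
      exact hBsub
    · intro hBρ
      refine ⟨C₀, hC₀, hC₀e ▸ Finset.inter_subset_left, ?_⟩
      intro hempty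
      rw [Finset.sdiff_eq_empty_iff_subset] at hempty
      have : C₀ ∩ oldSet n m = C₀ := Finset.inter_eq_left.2 hempty
      exact hBρ (by rw [← hC₀e, this]; exact hC₀)
  have hsum : ∑ B ∈ π', (if B ∈ ρ then (1 : ℝ) else 0)
      = ((π'.filter (fun B => B ∈ ρ)).card : ℝ) := by
    rw [Finset.sum_boole]
  have hsplit : (π'.filter (fun B => B ∈ ρ)).card + (π'.filter (fun B => B ∉ ρ)).card
      = π'.card := by rw [Finset.card_filter_add_card_filter_not]
  rw [Rcnt, hfilter, hsum]
  have h1 : (π'.filter (fun B => B ∉ ρ)).card = j - (π'.filter (fun B => B ∈ ρ)).card := by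
    omega
  have h2 : (π'.filter (fun B => B ∈ ρ)).card ≤ j := by omega
  rw [h1]
  push_cast [Nat.cast_sub h2]
  ring

end AuxFin

set_option maxHeartbeats 3000000 in
/-- Ewens–Pitman, expected number of re-observed old species,
given only the number of blocks. -/
theorem looking_backward_estimator_incomplete_EP
    (n m j : ℕ) (hn : 1 ≤ n) (hm : 1 ≤ m) (hj1 : 1 ≤ j) (hjn : j ≤ n)
    (σ θ : ℝ) (hσ0 : 0 < σ) (hσ1 : σ < 1) (hθ : -σ < θ)
    (hVnj : 0 < EPV σ θ n j) :
    condExpK σ (EPV σ θ) n m j (fun ρ => (Rcnt n m ρ : ℝ)) =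
      (j : ℝ) -
        (1 / (cgfc n j σ * risingFac (θ + n) m)) *
          ∑ s ∈ Finset.Icc 1 (n - (j - 1)),
            (Nat.choose n s : ℝ) * risingFac (θ + (n : ℝ) - (s : ℝ) + σ) m *
              cgfc s 1 σ * cgfc (n - s) (j - 1) σ := by
  classical
  obtain ⟨jj, rfl⟩ : ∃ jj, j = jj + 1 := ⟨j - 1, by omega⟩
  set old : Finset (Fin (n + m)) := oldSet n m with hold_def
  have hold_card : old.card = n := card_filter_lt_fin (n + m) n (Nat.le_add_right n m)
  have hn1 : (1 : ℝ) ≤ (n : ℝ) := by exact_mod_cast hn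
  have hθpos : ∀ t : ℕ, 0 < θ + ((n + t : ℕ) : ℝ) := by
    intro t
    have h1 : (n : ℝ) ≤ ((n + t : ℕ) : ℝ) := by exact_mod_cast Nat.le_add_right n t
    linarith
  have hθn0 : (0 : ℝ) < θ + (n : ℝ) := by
    have := hθpos 0
    simpa using this
  set R := risingFac (θ + (n : ℝ)) m with hR_def
  have hRpos : 0 < R := risingFac_pos hθn0 m
  have hRne : R ≠ 0 := ne_of_gt hRpos
  set E := EPV σ θ n (jj + 1) with hE_def
  have hEne : E ≠ 0 := ne_of_gt hVnj
  -- the increasing chain of ground sets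
  set sB : ℕ → Finset (Fin (n + m)) :=
    fun t => Finset.univ.filter (fun x : Fin (n + m) => (x : ℕ) < n + t) with hsB_def
  have hsB0 : sB 0 = old := by
    simp only [hsB_def, hold_def, oldSet, Nat.add_zero]
  have hsBcard : ∀ t, t ≤ m → (sB t).card = n + t := by
    intro t ht
    exact card_filter_lt_fin (n + m) (n + t) (by omega)
  have hsBm : sB m = Finset.univ := by
    ext x
    simp only [hsB_def, Finset.mem_filter, Finset.mem_univ, true_and, iff_true]
    exact x.isLt
  have hnew_not_old' : ∀ t (ht : t < m), ((⟨n + t, by omega⟩ : Fin (n + m)) ∉ old) := by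
    intro t ht
    simp only [hold_def, oldSet, Finset.mem_filter, Finset.mem_univ, true_and]
    omega
  have hnew_not_sB : ∀ t (ht : t < m), ((⟨n + t, by omega⟩ : Fin (n + m)) ∉ sB t) := by
    intro t ht
    simp only [hsB_def, Finset.mem_filter, Finset.mem_univ, true_and]
    omega
  have hsBsucc : ∀ t (ht : t < m),
      sB (t + 1) = insert (⟨n + t, by omega⟩ : Fin (n + m)) (sB t) := by
    intro t ht
    ext x
    simp only [hsB_def, Finset.mem_filter, Finset.mem_univ, true_and, Finset.mem_insert,
      Fin.ext_iff]
    omega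
  -- key per-π' computation
  have key : ∀ π' ∈ (partsOn old).filter (fun P => P.card = jj + 1),
      (∑ ρ ∈ (partsOn (Finset.univ : Finset (Fin (n + m)))).filter
          (fun ρ => restrictPart ρ old = π'),
        (Rcnt n m ρ : ℝ) * gibbsW σ (EPV σ θ (n + m)) ρ)
      = ((jj + 1 : ℕ) : ℝ) * (E * wprod σ π')
        - ∑ B ∈ π', E * wprod σ π' * risingFac (θ + (n : ℝ) - B.card + σ) m / R := by
    intro π' hπ'
    rw [Finset.mem_filter] at hπ'
    have hπ'p : IsPartOn old π' := mem_partsOn.1 hπ'.1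
    have hπ'c : π'.card = jj + 1 := hπ'.2
    -- total mass
    have Mtot : ∀ t, t ≤ m →
        (∑ ρ ∈ (partsOn (sB t)).filter (fun ρ => restrictPart ρ old = π'),
          EPV σ θ (sB t).card ρ.card * wprod σ ρ) = E * wprod σ π' := by
      intro t
      induction t with
      | zero =>
          intro _
          rw [hsB0]
          have hfil : (partsOn old).filter (fun ρ => restrictPart ρ old = π') = {π'} := by
            ext ρ
            simp only [Finset.mem_filter, mem_partsOn, Finset.mem_singleton]
            constructor
            · rintro ⟨hρ, hres⟩
              rw [restrict_self hρ] at hres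
              exact hres
            · rintro rfl
              exact ⟨hπ'p, restrict_self hπ'p⟩
          rw [hfil, Finset.sum_singleton, hold_card, hπ'c, hE_def]
      | succ t ih =>
          intro ht
          have ht' : t < m := by omega
          rw [hsBsucc t ht']
          rw [extSum_step_total (hnew_not_sB t ht') (hnew_not_old' t ht') ?_]
          · exact ih (by omega)
          · rw [hsBcard t (by omega)]
            exact ne_of_gt (hθpos t)
    -- avoidance mass
    have Aval : ∀ B ∈ π', ∀ t, t ≤ m →
        (∑ ρ ∈ (partsOn (sB t)).filter (fun ρ => restrictPart ρ old = π' ∧ B ∈ ρ),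
          EPV σ θ (sB t).card ρ.card * wprod σ ρ) * risingFac (θ + (n : ℝ)) t
        = E * wprod σ π' * risingFac (θ + (n : ℝ) - B.card + σ) t := by
      intro B hB t
      induction t with
      | zero =>
          intro _
          rw [hsB0, risingFac_zero, risingFac_zero, mul_one, mul_one]
          have hfil : (partsOn old).filter (fun ρ => restrictPart ρ old = π' ∧ B ∈ ρ)
              = {π'} := by
            ext ρ
            simp only [Finset.mem_filter, mem_partsOn, Finset.mem_singleton]
            constructor
            · rintro ⟨hρ, hres, -⟩
              rw [restrict_self hρ] at hres
              exact hres
            · rintro rfl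
              exact ⟨hπ'p, restrict_self hπ'p, hB⟩
          rw [hfil, Finset.sum_singleton, hold_card, hπ'c, hE_def]
      | succ t ih =>
          intro ht
          have ht' : t < m := by omega
          have ihv := ih (by omega)
          have haB : (⟨n + t, by omega⟩ : Fin (n + m)) ∉ B :=
            fun hmem => (hnew_not_old' t ht') (hπ'p.block_subset hB hmem)
          have hBne : B ≠ ∅ := hπ'p.block_ne_empty hB
          have hθN : θ + ((sB t).card : ℝ) ≠ 0 := by
            rw [hsBcard t (by omega)]
            exact ne_of_gt (hθpos t)
          have hstep := extSum_step_avoid (π' := π') (σ := σ) (θ := θ)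
            (hnew_not_sB t ht') (hnew_not_old' t ht') haB hBne hθN
          rw [hsBsucc t ht', risingFac_succ, risingFac_succ]
          rw [hsBcard t (by omega)] at hstep ihv
          push_cast at hstep ihv ⊢
          linear_combination (risingFac (θ + (n : ℝ)) t) * hstep +
            (θ + (n : ℝ) + (t : ℝ) - (B.card : ℝ) + σ) * ihv
    -- specialize to t = m
    have hMm := Mtot m le_rfl
    rw [hsBm, Finset.card_univ, Fintype.card_fin] at hMm
    have hAm : ∀ B ∈ π',
        (∑ ρ ∈ (partsOn (Finset.univ : Finset (Fin (n + m)))).filter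
            (fun ρ => restrictPart ρ old = π' ∧ B ∈ ρ),
          EPV σ θ (n + m) ρ.card * wprod σ ρ)
        = E * wprod σ π' * risingFac (θ + (n : ℝ) - B.card + σ) m / R := by
      intro B hB
      have := Aval B hB m le_rfl
      rw [hsBm, Finset.card_univ, Fintype.card_fin] at this
      rw [eq_div_iff hRne]
      exact this
    -- rewrite the summand
    have hconv : ∀ ρ ∈ (partsOn (Finset.univ : Finset (Fin (n + m)))).filter
        (fun ρ => restrictPart ρ old = π'),
        (Rcnt n m ρ : ℝ) * gibbsW σ (EPV σ θ (n + m)) ρ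
        = ((jj + 1 : ℕ) : ℝ) * (EPV σ θ (n + m) ρ.card * wprod σ ρ)
          - ∑ B ∈ π', (if B ∈ ρ then EPV σ θ (n + m) ρ.card * wprod σ ρ else 0) := by
      intro ρ hρ
      rw [Finset.mem_filter] at hρ
      have hpart := mem_partsOn.1 hρ.1
      rw [Rcnt_eq_sub n m (jj + 1) ρ hpart hρ.2 hπ'p hπ'c]
      rw [show gibbsW σ (EPV σ θ (n + m)) ρ = EPV σ θ (n + m) ρ.card * wprod σ ρ from rfl]
      rw [sub_mul, Finset.sum_mul]
      congr 1
      apply Finset.sum_congr rfl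
      intro B _
      rw [ite_mul, one_mul, zero_mul]
    rw [Finset.sum_congr rfl hconv, Finset.sum_sub_distrib]
    congr 1
    · rw [← Finset.mul_sum, hMm]
    · rw [Finset.sum_comm]
      apply Finset.sum_congr rfl
      intro B hB
      rw [← hAm B hB]
      rw [← Finset.sum_filter, Finset.filter_filter]
    -- end key
  -- Denominator
  have hpartsJ : partsJOf old (jj + 1) = (partsOn old).filter (fun P => P.card = jj + 1) := by
    rw [partsJOf, partsOn, Finset.filter_filter]
  have hgpos : 0 < gP σ n (jj + 1) := gP_pos hσ1 (by omega) (by omega)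
  have hgne : gP σ n (jj + 1) ≠ 0 := ne_of_gt hgpos
  have hDen : ∑ π' ∈ partsJOf old (jj + 1), gibbsW σ (EPV σ θ n) π'
      = E * gP σ n (jj + 1) := by
    rw [hpartsJ]
    have hcg : ∀ π' ∈ (partsOn old).filter (fun P => P.card = jj + 1),
        gibbsW σ (EPV σ θ n) π' = E * wprod σ π' := by
      intro π' hπ'
      rw [Finset.mem_filter] at hπ'
      rw [show gibbsW σ (EPV σ θ n) π' = EPV σ θ n π'.card * wprod σ π' from rfl, hπ'.2]
    rw [Finset.sum_congr rfl hcg, ← Finset.mul_sum]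
    congr 1
    have := Sval_eq_gP σ old (jj + 1)
    rw [hold_card] at this
    rw [← this, Sval]
  -- the marked sum T
  set T := ∑ π' ∈ (partsOn old).filter (fun P => P.card = jj + 1),
      (∑ B ∈ π', risingFac (θ + (n : ℝ) - B.card + σ) m) * wprod σ π' with hT_def
  -- Numerator
  have hwithJ : withJ n m (jj + 1) = (partsOn (Finset.univ : Finset (Fin (n + m)))).filter
      (fun ρ => (restrictPart ρ old).card = jj + 1) := by
    rw [withJ, partsOn, Finset.filter_filter]
  have hmaps : ∀ ρ ∈ (partsOn (Finset.univ : Finset (Fin (n + m)))).filter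
      (fun ρ => (restrictPart ρ old).card = jj + 1),
      restrictPart ρ old ∈ (partsOn old).filter (fun P => P.card = jj + 1) := by
    intro ρ hρ
    rw [Finset.mem_filter] at hρ ⊢
    exact ⟨mem_partsOn.2 (restrict_isPartOn (mem_partsOn.1 hρ.1) (Finset.subset_univ old)),
      hρ.2⟩
  have hNum : ∑ ρ ∈ withJ n m (jj + 1), (Rcnt n m ρ : ℝ) * gibbsW σ (EPV σ θ (n + m)) ρ
      = ((jj + 1 : ℕ) : ℝ) * (E * gP σ n (jj + 1)) - (E / R) * T := by
    rw [hwithJ, ← Finset.sum_fiberwise_of_maps_to hmaps]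
    have hfib : ∀ π' ∈ (partsOn old).filter (fun P => P.card = jj + 1),
        ∑ ρ ∈ ((partsOn (Finset.univ : Finset (Fin (n + m)))).filter
            (fun ρ => (restrictPart ρ old).card = jj + 1)).filter
            (fun ρ => restrictPart ρ old = π'),
          (Rcnt n m ρ : ℝ) * gibbsW σ (EPV σ θ (n + m)) ρ
        = ((jj + 1 : ℕ) : ℝ) * (E * wprod σ π')
          - (E / R) * ((∑ B ∈ π', risingFac (θ + (n : ℝ) - B.card + σ) m) * wprod σ π') := by
      intro π' hπ'
      have hπ'c : π'.card = jj + 1 := (Finset.mem_filter.1 hπ').2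
      have hsets : ((partsOn (Finset.univ : Finset (Fin (n + m)))).filter
            (fun ρ => (restrictPart ρ old).card = jj + 1)).filter
            (fun ρ => restrictPart ρ old = π')
          = (partsOn (Finset.univ : Finset (Fin (n + m)))).filter
            (fun ρ => restrictPart ρ old = π') := by
        rw [Finset.filter_filter]
        apply Finset.filter_congr
        intro ρ _
        constructor
        · exact fun h => h.2
        · intro h
          exact ⟨by rw [h, hπ'c], h⟩
      rw [hsets, key π' hπ']
      congr 1
      rw [Finset.sum_mul, Finset.mul_sum]
      apply Finset.sum_congr rfl
      intro B _
      ring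
    rw [Finset.sum_congr rfl hfib, Finset.sum_sub_distrib, ← Finset.mul_sum, ← Finset.mul_sum,
      ← Finset.mul_sum]
    congr 1
    have := Sval_eq_gP σ old (jj + 1)
    rw [hold_card] at this
    rw [← this, Sval]
  -- compute T via the marked-block decomposition
  set vfun : ℕ → ℝ := fun s => if s = 0 then 0 else risingFac (θ + (n : ℝ) - s + σ) m *
      risingFac (1 - σ) (s - 1) * gP σ (n - s) jj with hvfun
  have hT : T = ∑ s ∈ Finset.Icc 1 (n - jj),
      (Nat.choose n s : ℝ) * risingFac (θ + (n : ℝ) - (s : ℝ) + σ) m *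
        risingFac (1 - σ) (s - 1) * gP σ (n - s) jj := by
    rw [hT_def, sum_marked σ old (jj + 1) (by omega)
      (F := fun B => risingFac (θ + (n : ℝ) - B.card + σ) m)]
    rw [Finset.sum_filter]
    have hstep : ∀ B ∈ old.powerset,
        (if B ≠ ∅ then risingFac (θ + (n : ℝ) - B.card + σ) m *
            risingFac (1 - σ) (B.card - 1) * Sval σ (old \ B) (jj + 1 - 1) else 0)
        = vfun B.card := by
      intro B hB
      rw [Finset.mem_powerset] at hB
      simp only [hvfun]
      by_cases hBe : B = ∅
      · rw [if_neg (by simp [hBe]), if_pos (by simp [hBe])]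
      · rw [if_pos hBe, if_neg (by simp [Finset.card_eq_zero, hBe])]
        rw [Nat.add_sub_cancel, Sval_eq_gP, Finset.card_sdiff_of_subset hB, hold_card]
    rw [Finset.sum_congr rfl hstep, Finset.sum_powerset_apply_card, hold_card]
    have hsub : Finset.Icc 1 (n - jj) ⊆ Finset.range (n + 1) := by
      intro x hx
      rw [Finset.mem_Icc] at hx
      rw [Finset.mem_range]
      omega
    have hvan : ∀ x ∈ Finset.range (n + 1), x ∉ Finset.Icc 1 (n - jj) →
        Nat.choose n x • vfun x = 0 := by
      intro x hx hxn
      rw [Finset.mem_range] at hx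
      rw [Finset.mem_Icc] at hxn
      simp only [hvfun]
      by_cases hx0 : x = 0
      · rw [if_pos hx0, smul_zero]
      · have hgz : gP σ (n - x) jj = 0 := by
          apply gP_zero_of_lt
          omega
        rw [if_neg hx0, hgz, mul_zero, smul_zero]
    rw [← Finset.sum_subset hsub hvan]
    apply Finset.sum_congr rfl
    intro s hs
    rw [Finset.mem_Icc] at hs
    simp only [hvfun]
    rw [if_neg (by omega), nsmul_eq_mul]
    ring
  -- final algebra
  rw [condExpK, ← hold_def, hNum, hDen]
  have hRHSsum : ∑ s ∈ Finset.Icc 1 (n - (jj + 1 - 1)),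
      (Nat.choose n s : ℝ) * risingFac (θ + (n : ℝ) - (s : ℝ) + σ) m *
        cgfc s 1 σ * cgfc (n - s) (jj + 1 - 1) σ
      = σ ^ (jj + 1) * ∑ s ∈ Finset.Icc 1 (n - jj),
          (Nat.choose n s : ℝ) * risingFac (θ + (n : ℝ) - (s : ℝ) + σ) m *
            risingFac (1 - σ) (s - 1) * gP σ (n - s) jj := by
    rw [Nat.add_sub_cancel, Finset.mul_sum]
    apply Finset.sum_congr rfl
    intro s hs
    rw [Finset.mem_Icc] at hs
    rw [cgfc_one' s hs.1, cgfc_eq_gP]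
    rw [pow_succ]
    ring
  rw [hRHSsum, cgfc_eq_gP, ← hT]
  have hσj : σ ^ (jj + 1) ≠ 0 := pow_ne_zero _ (ne_of_gt hσ0)
  field_simp [hEne, hRne, hgne, hσj]
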